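/- Let k_1, …, k_14 be positive real numbers and let u > 0 and y > 0 be arbitrary. Define Yp* = k_1·k_3·k_5·(k_10+k_11)·(k_13+k_14) / (k_2·k_9·k_11·(k_4+k_5)·(k_13+k_14) + k_1·k_3·k_12·k_14·(k_10+k_11)), and set x = u·k_8·(k_4+k_5)/(k_3·k_5), xd = u·k_2·k_8·(k_4+k_5)/(k_1·k_3·k_5), xt = u·k_8/k_5, xp = u·(k_7+k_8)/(k_6·y), yp = Yp*, v = k_9·xd·yp/(k_10+k_11), w = k_12·xt·yp/(k_13+k_14). Then (x, xd, xt, xp, y, yp, u, v, w) is a positive steady state of the EnvZ–OmpR mass-action system, i.e. all nine right-hand sides vanish at this point. -/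

import Mathlib

/-- For any positive rate constants `k₁, …, k₁₄` and any positive free
parameters `u` (steady-state value of the complex `X_pY`) and `y` (of `OmpR Y`),
the displayed parametrized point is a positive steady state of the EnvZ–OmpR
mass-action system: all nine coordinates are positive and all nine right-hand
sides vanish. -/
theorem envz_ompr_parametrization_is_steady_state
    (k1 k2 k3 k4 k5 k6 k7 k8 k9 k10 k11 k12 k13 k14 : ℝ)
    (hk1 : 0 < k1) (hk2 : 0 < k2) (hk3 : 0 < k3) (hk4 : 0 < k4)
    (hk5 : 0 < k5) (hk6 : 0 < k6) (hk7 : 0 < k7) (hk8 : 0 < k8)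
    (hk9 : 0 < k9) (hk10 : 0 < k10) (hk11 : 0 < k11) (hk12 : 0 < k12)
    (hk13 : 0 < k13) (hk14 : 0 < k14)
    (u y : ℝ) (hu : 0 < u) (hy : 0 < y)
    (x xd xt xp yp v w : ℝ)
    (hyp : yp = k1 * k3 * k5 * (k10 + k11) * (k13 + k14) /
      (k2 * k9 * k11 * (k4 + k5) * (k13 + k14) +
        k1 * k3 * k12 * k14 * (k10 + k11)))
    (hx : x = u * k8 * (k4 + k5) / (k3 * k5))
    (hxd : xd = u * k2 * k8 * (k4 + k5) / (k1 * k3 * k5))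
    (hxt : xt = u * k8 / k5)
    (hxp : xp = u * (k7 + k8) / (k6 * y))
    (hv : v = k9 * xd * yp / (k10 + k11))
    (hw : w = k12 * xt * yp / (k13 + k14)) :
    (0 < x ∧ 0 < xd ∧ 0 < xt ∧ 0 < xp ∧ 0 < y ∧ 0 < yp ∧ 0 < u ∧ 0 < v ∧ 0 < w) ∧
    k1 * xd - (k2 + k3) * x + k4 * xt + k8 * u = 0 ∧
    k2 * x - k1 * xd - k9 * xd * yp + (k10 + k11) * v = 0 ∧
    k3 * x - (k4 + k5) * xt - k12 * xt * yp + (k13 + k14) * w = 0 ∧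
    k5 * xt - k6 * xp * y + k7 * u = 0 ∧
    -(k6 * xp * y) + k7 * u + k11 * v + k14 * w = 0 ∧
    k8 * u - k9 * xd * yp + k10 * v - k12 * xt * yp + k13 * w = 0 ∧
    k6 * xp * y - (k7 + k8) * u = 0 ∧
    k9 * xd * yp - (k10 + k11) * v = 0 ∧
    k12 * xt * yp - (k13 + k14) * w = 0 := by
  have hden : 0 < k2 * k9 * k11 * (k4 + k5) * (k13 + k14) +
      k1 * k3 * k12 * k14 * (k10 + k11) := by positivity
  have hypp : 0 < yp := by rw [hyp]; positivity
  have hxpos : 0 < x := by rw [hx]; positivity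
  have hxdpos : 0 < xd := by rw [hxd]; positivity
  have hxtpos : 0 < xt := by rw [hxt]; positivity
  have hxppos : 0 < xp := by rw [hxp]; positivity
  have hvpos : 0 < v := by rw [hv]; positivity
  have hwpos : 0 < w := by rw [hw]; positivity
  have hx3 : k3 * x = (k4 + k5) * xt := by
    rw [hx, hxt]; field_simp
  have hxd1 : k1 * xd = k2 * x := by
    rw [hx, hxd]; field_simp
  have hxt5 : k5 * xt = k8 * u := by
    rw [hxt]; field_simp
  have hxp6 : k6 * xp * y = (k7 + k8) * u := by
    rw [hxp]; field_simp
  have hv8 : k9 * xd * yp = (k10 + k11) * v := by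
    rw [hv]; field_simp
  have hw9 : k12 * xt * yp = (k13 + k14) * w := by
    rw [hw]; field_simp
  have hkey : k11 * v + k14 * w = k8 * u := by
    subst hv hw hxd hxt hyp
    field_simp
  refine ⟨⟨hxpos, hxdpos, hxtpos, hxppos, hy, hypp, hu, hvpos, hwpos⟩,
    by linarith, by linarith, by linarith, by linarith, by linarith,
    by linarith, by linarith, by linarith, by linarith⟩
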